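/- Consider the rational function s(τ) = (τ³ − τ)/(5τ² + 3) on ℂ. Then: (i) for every c ∈ ℂ, the set of τ ∈ ℂ with 5τ² + 3 ≠ 0 and s(τ) = c is nonempty and has at most three elements (moreover every complex root of τ³ − τ − c(5τ² + 3) automatically satisfies 5τ² + 3 ≠ 0); (ii) at every τ with 5τ² + 3 ≠ 0, s is complex-differentiable with derivative (5τ² − 1)(τ² + 3)/(5τ² + 3)², so the derivative vanishes if and only if 5τ² = 1 or τ² = −3, i.e. exactly at the four points τ = ±1/√5 and τ = ±√(−3). (Lemma 3.12: the map s is a triple covering ℙ¹ → ℙ¹ with simple ramification at these four points.) -/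

import Mathlib

open Polynomial

private lemma sq_eq_aux (τ a : ℂ) : τ^2 = a^2 ↔ τ = a ∨ τ = -a := by
  constructor
  · intro h
    have h' : (τ - a) * (τ + a) = 0 := by linear_combination h
    rcases mul_eq_zero.mp h' with h'' | h''
    · exact Or.inl (by linear_combination h'')
    · exact Or.inr (by linear_combination h'')
  · rintro (rfl | rfl) <;> ring

private lemma key_aux (c τ : ℂ) (h : τ^3 - τ - c * (5*τ^2 + 3) = 0) : 5*τ^2 + 3 ≠ 0 := by
  intro h0
  have hτ2 : τ^2 = -3/5 := by linear_combination h0/5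
  have h1 : τ^3 - τ = 0 := by linear_combination h + c * h0
  have h2 : (-8/5 : ℂ) * τ = 0 := by linear_combination h1 - τ * hτ2
  have hτ : τ = 0 := by
    rcases mul_eq_zero.mp h2 with h3 | h3
    · norm_num at h3
    · exact h3
  rw [hτ] at h0
  norm_num at h0

/-- Lemma 3.12: the map s(τ) = (τ³−τ)/(5τ²+3) is a triple covering of ℙ¹ with simple
ramification at the four points τ = ±1/√5 and τ = ±√(−3). -/
theorem s_triple_cover_ramification :
    (∀ c : ℂ,
      ({τ : ℂ | 5*τ^2 + 3 ≠ 0 ∧ (τ^3 - τ) / (5*τ^2 + 3) = c}).Nonempty ∧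
      ({τ : ℂ | 5*τ^2 + 3 ≠ 0 ∧ (τ^3 - τ) / (5*τ^2 + 3) = c}).ncard ≤ 3 ∧
      (∀ τ : ℂ, τ^3 - τ - c * (5*τ^2 + 3) = 0 → 5*τ^2 + 3 ≠ 0)) ∧
    (∀ τ : ℂ, 5*τ^2 + 3 ≠ 0 →
      HasDerivAt (fun x : ℂ => (x^3 - x) / (5*x^2 + 3))
        ((5*τ^2 - 1) * (τ^2 + 3) / (5*τ^2 + 3)^2) τ ∧
      ((5*τ^2 - 1) * (τ^2 + 3) / (5*τ^2 + 3)^2 = 0 ↔ 5*τ^2 = 1 ∨ τ^2 = -3) ∧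
      (5*τ^2 = 1 ∨ τ^2 = -3 ↔
        τ = 1 / (Real.sqrt 5 : ℂ) ∨ τ = -(1 / (Real.sqrt 5 : ℂ)) ∨
        τ = Complex.I * (Real.sqrt 3 : ℂ) ∨ τ = -(Complex.I * (Real.sqrt 3 : ℂ)))) := by
  constructor
  · intro c
    set p : ℂ[X] := X^3 - C (5*c) * X^2 - X - C (3*c) with hp
    have hdeg : p.degree = 3 := by
      rw [hp]
      compute_degree!
    have hp0 : p ≠ 0 := by
      intro h
      rw [h] at hdeg
      simp at hdeg
    have heval : ∀ τ : ℂ, p.eval τ = τ^3 - τ - c * (5*τ^2 + 3) := by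
      intro τ
      simp [hp]
      ring
    have hmem : ∀ τ : ℂ, τ ∈ {τ : ℂ | 5*τ^2 + 3 ≠ 0 ∧ (τ^3 - τ) / (5*τ^2 + 3) = c} ↔
        p.eval τ = 0 := by
      intro τ
      rw [heval]
      constructor
      · rintro ⟨h0, h1⟩
        rw [div_eq_iff h0] at h1
        linear_combination h1
      · intro h
        have h0 := key_aux c τ h
        refine ⟨h0, ?_⟩
        rw [div_eq_iff h0]
        linear_combination h
    refine ⟨?_, ?_, key_aux c⟩
    · obtain ⟨z, hz⟩ := Complex.exists_root (by rw [hdeg]; norm_num : 0 < p.degree)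
      exact ⟨z, (hmem z).mpr hz⟩
    · have hsub : {τ : ℂ | 5*τ^2 + 3 ≠ 0 ∧ (τ^3 - τ) / (5*τ^2 + 3) = c} ⊆
          (p.roots.toFinset : Set ℂ) := by
        intro τ hτ
        simp only [Finset.coe_sort_coe, Multiset.mem_toFinset, Finset.mem_coe]
        rw [mem_roots hp0]
        exact (hmem τ).mp hτ
      calc ({τ : ℂ | 5*τ^2 + 3 ≠ 0 ∧ (τ^3 - τ) / (5*τ^2 + 3) = c}).ncard
          ≤ (p.roots.toFinset : Set ℂ).ncard := Set.ncard_le_ncard hsub (p.roots.toFinset).finite_toSet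
        _ = p.roots.toFinset.card := by rw [Set.ncard_coe_finset]
        _ ≤ Multiset.card p.roots := Multiset.toFinset_card_le _
        _ ≤ p.natDegree := Polynomial.card_roots' p
        _ = 3 := natDegree_eq_of_degree_eq_some hdeg
  · intro τ hτ
    have hd : (5*τ^2 + 3)^2 ≠ 0 := pow_ne_zero _ hτ
    refine ⟨?_, ?_, ?_⟩
    · have hf : HasDerivAt (fun x : ℂ => x^3 - x) (3*τ^2 - 1) τ := by
        have h := (hasDerivAt_pow 3 τ).sub (hasDerivAt_id' τ)
        exact h.congr_deriv (by norm_num)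
      have hg : HasDerivAt (fun x : ℂ => 5*x^2 + 3) (10*τ) τ := by
        have h := ((hasDerivAt_pow 2 τ).const_mul (5:ℂ)).add_const (3:ℂ)
        exact h.congr_deriv (by norm_num <;> ring)
      have h := hf.div hg hτ
      exact h.congr_deriv (by ring)
    · constructor
      · intro h
        rcases div_eq_zero_iff.mp h with h' | h'
        · rcases mul_eq_zero.mp h' with h2 | h2
          · exact Or.inl (by linear_combination h2)
          · exact Or.inr (by linear_combination h2)
        · exact absurd h' hd
      · rintro (h | h)
        · have h2 : 5*τ^2 - 1 = 0 := by linear_combination h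
          simp [h2]
        · have h2 : τ^2 + 3 = 0 := by linear_combination h
          simp [h2]
    · have h5 : ((Real.sqrt 5 : ℝ) : ℂ)^2 = 5 := by
        rw [← Complex.ofReal_pow, Real.sq_sqrt (by norm_num : (5:ℝ) ≥ 0)]
        norm_num
      have h3 : ((Real.sqrt 3 : ℝ) : ℂ)^2 = 3 := by
        rw [← Complex.ofReal_pow, Real.sq_sqrt (by norm_num : (3:ℝ) ≥ 0)]
        norm_num
      have h5ne : ((Real.sqrt 5 : ℝ) : ℂ) ≠ 0 := by
        intro h
        rw [h] at h5
        norm_num at h5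
      have ha : (1 / ((Real.sqrt 5 : ℝ) : ℂ))^2 = 1/5 := by
        rw [div_pow, one_pow, h5]
      have hb : (Complex.I * ((Real.sqrt 3 : ℝ) : ℂ))^2 = -3 := by
        rw [mul_pow, Complex.I_sq, h3]
        ring
      constructor
      · rintro (h | h)
        · have : τ^2 = (1 / ((Real.sqrt 5 : ℝ) : ℂ))^2 := by
            rw [ha]; linear_combination h/5
          rcases (sq_eq_aux τ _).mp this with h' | h'
          · exact Or.inl h'
          · exact Or.inr (Or.inl h')
        · have : τ^2 = (Complex.I * ((Real.sqrt 3 : ℝ) : ℂ))^2 := by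
            rw [hb]; exact h
          rcases (sq_eq_aux τ _).mp this with h' | h'
          · exact Or.inr (Or.inr (Or.inl h'))
          · exact Or.inr (Or.inr (Or.inr h'))
      · rintro (rfl | rfl | rfl | rfl)
        · left; rw [ha]; ring
        · left; rw [neg_pow, ha]; ring
        · right; rw [hb]
        · right; rw [neg_pow, hb]; ring
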